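/- Let (O, ⊔, ⊓, ⊥, ⊤, ᶜ) be an ortholattice and f : O → O an arbitrary function. Then there is an ortholattice Ō such that O is an ortho-sublattice of Ō and there is a unary orthopolynomial function p on Ō with p(a) = f(a) for all a ∈ O. -/

import Mathlib

universe u

/-- An ortholattice: a bounded lattice with an antitone orthocomplementation `ᶜ`
satisfying `xᶜᶜ = x`, `x ⊔ xᶜ = ⊤` and `x ⊓ xᶜ = ⊥`. -/
class Ortholattice (O : Type u) extends Lattice O, BoundedOrder O, Compl O where
  compl_antitone : ∀ x y : O, x ≤ y → yᶜ ≤ xᶜ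
  compl_compl : ∀ x : O, xᶜᶜ = x
  sup_compl : ∀ x : O, x ⊔ xᶜ = ⊤
  inf_compl : ∀ x : O, x ⊓ xᶜ = ⊥

/-- `IsOrthoPolyFn O n p` says that `p : (Fin n → O) → O` is an `n`-ary orthopolynomial
function on `O`: it lies in the smallest set of functions containing the coordinate
projections and all constant functions and closed under pointwise join, meet and
orthocomplement. -/
inductive IsOrthoPolyFn (O : Type u) [Ortholattice O] (n : ℕ) : ((Fin n → O) → O) → Prop
  | proj (i : Fin n) : IsOrthoPolyFn O n fun x => x i
  | const (c : O) : IsOrthoPolyFn O n fun _ => c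
  | sup {p q : (Fin n → O) → O} : IsOrthoPolyFn O n p → IsOrthoPolyFn O n q →
      IsOrthoPolyFn O n fun x => p x ⊔ q x
  | inf {p q : (Fin n → O) → O} : IsOrthoPolyFn O n p → IsOrthoPolyFn O n q →
      IsOrthoPolyFn O n fun x => p x ⊓ q x
  | compl {p : (Fin n → O) → O} : IsOrthoPolyFn O n p →
      IsOrthoPolyFn O n fun x => (p x)ᶜ

/-- `e` is an ortholattice embedding: an injective map preserving `⊔`, `⊓`, `⊥`, `⊤`
and `ᶜ` (so its image is an ortho-sublattice). -/
def IsOrthoEmbedding {O M : Type u} [Ortholattice O] [Ortholattice M] (e : O → M) : Prop :=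
  Function.Injective e ∧ (∀ x y, e (x ⊔ y) = e x ⊔ e y) ∧
    (∀ x y, e (x ⊓ y) = e x ⊓ e y) ∧ e ⊥ = ⊥ ∧ e ⊤ = ⊤ ∧ ∀ x, e xᶜ = (e x)ᶜ

namespace OrthoProof

variable {O : Type u} [Ortholattice O]

theorem occ (x : O) : xᶜᶜ = x := Ortholattice.compl_compl x

theorem oanti {x y : O} (h : x ≤ y) : yᶜ ≤ xᶜ := Ortholattice.compl_antitone x y h

theorem le_compl_swap {x y : O} (h : x ≤ yᶜ) : y ≤ xᶜ := by
  have := oanti h; rwa [occ] at this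

theorem compl_le_swap {x y : O} (h : xᶜ ≤ y) : yᶜ ≤ x := by
  have := oanti h; rwa [occ] at this

theorem obot_compl : (⊥ : O)ᶜ = ⊤ := by
  have := Ortholattice.sup_compl (⊥ : O); rwa [bot_sup_eq] at this

theorem otop_compl : (⊤ : O)ᶜ = ⊥ := by
  have := Ortholattice.inf_compl (⊤ : O); rwa [top_inf_eq] at this

theorem eq_bot_of_le_compl_self {x : O} (h : x ≤ xᶜ) : x = ⊥ := by
  have h2 : x ≤ x ⊓ xᶜ := le_inf le_rfl h
  rw [Ortholattice.inf_compl] at h2; exact le_antisymm h2 bot_le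

theorem eq_top_of_compl_le_self {x : O} (h : xᶜ ≤ x) : x = ⊤ := by
  have h2 : x ⊔ xᶜ ≤ x := sup_le le_rfl h
  rw [Ortholattice.sup_compl] at h2; exact le_antisymm le_top h2

theorem ocompl_sup (x y : O) : (x ⊔ y)ᶜ = xᶜ ⊓ yᶜ := by
  refine le_antisymm (le_inf (oanti le_sup_left) (oanti le_sup_right)) ?_
  exact le_compl_swap (sup_le (le_compl_swap inf_le_left) (le_compl_swap inf_le_right))

theorem ocompl_inf (x y : O) : (x ⊓ y)ᶜ = xᶜ ⊔ yᶜ := by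
  have h := ocompl_sup xᶜ yᶜ
  rw [occ, occ] at h
  rw [← h, occ]

theorem compl_ne_top {x : O} (h : x ≠ ⊥) : xᶜ ≠ ⊤ := fun hc => h (by rw [← occ x, hc, otop_compl])

theorem compl_ne_bot {x : O} (h : x ≠ ⊤) : xᶜ ≠ ⊥ := fun hc => h (by rw [← occ x, hc, obot_compl])

/-- The points of the orthogonality frame. -/
inductive Pt (O : Type u) : Type u where
  | x : O → Pt O
  | v : Bool → O → Pt O
  | r : Bool → Bool → O → Pt O
  | s : Bool → Bool → O → Pt O
  | gv : Bool → Pt O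
  | gr : Bool → Bool → Pt O
  | gs : Bool → Bool → Pt O

/-- One-sided orthogonality data. -/
def base (F : Bool → O → O) : Pt O → Pt O → Prop
  | .x c, .x d => c ≤ dᶜ ∧ c ≠ ⊥ ∧ d ≠ ⊥
  | .x c, .v _ b => c ≤ b ∧ c ≠ ⊥ ∧ b ≠ ⊤
  | .x c, .s i _ a => c ≤ F i a ∧ c ≠ ⊥
  | .v _ b, .v _ b' => b'ᶜ ≤ b ∧ b ≠ ⊤ ∧ b' ≠ ⊤
  | .v _ b, .s i _ a => (F i a)ᶜ ≤ b ∧ b ≠ ⊤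
  | .v d b, .r d' _ c => d = d' ∧ c ≤ b
  | .s i _ a, .s j _ a' => (F i a)ᶜ ≤ F j a' ∧ F i a ≠ ⊤ ∧ F j a' ≠ ⊤
  | .s _ t a, .r d t' c => t = t' ∧ c ≤ (cond d aᶜ a)
  | .gv d, .v d' _ => d = d'
  | .gr d t, .r d' t' _ => d = d' ∧ t = t'
  | .gs i t, .s i' t' _ => i = i' ∧ t = t'
  | _, _ => False

/-- The (symmetric) orthogonality relation. -/
def orth (F : Bool → O → O) (p q : Pt O) : Prop := base F p q ∨ base F q p

theorem orth_symm {F : Bool → O → O} {p q : Pt O} (h : orth F p q) : orth F q p := h.symm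

theorem orth_irrefl (F : Bool → O → O) (p : Pt O) : ¬ orth F p p := by
  cases p <;> simp only [orth, base, or_self] <;> try exact fun h => h
  · rintro ⟨h, hc, -⟩; exact hc (eq_bot_of_le_compl_self h)
  · rintro ⟨h, hb, -⟩; exact hb (eq_top_of_compl_le_self h)
  · rintro ⟨h, hb, -⟩; exact hb (eq_top_of_compl_le_self h)


variable (F : Bool → O → O)

/-- The orthogonal of a set of points. -/
def perp (S : Set (Pt O)) : Set (Pt O) := {p | ∀ q ∈ S, orth F p q}

theorem subset_perp_perp (S : Set (Pt O)) : S ⊆ perp F (perp F S) := by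
  intro p hp q hq
  exact (hq p hp).symm

theorem perp_anti {S T : Set (Pt O)} (h : S ⊆ T) : perp F T ⊆ perp F S := by
  intro p hp q hq
  exact hp q (h hq)

theorem perp_perp_perp (S : Set (Pt O)) : perp F (perp F (perp F S)) = perp F S :=
  le_antisymm (perp_anti F (subset_perp_perp F S)) (subset_perp_perp F (perp F S))

theorem perp_union (S T : Set (Pt O)) : perp F (S ∪ T) = perp F S ∩ perp F T := by
  ext p
  constructor
  · intro hp
    exact ⟨fun q hq => hp q (Or.inl hq), fun q hq => hp q (Or.inr hq)⟩
  · rintro ⟨h1, h2⟩ q (hq | hq)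
    · exact h1 q hq
    · exact h2 q hq

theorem perp_empty : perp F (∅ : Set (Pt O)) = Set.univ := by
  ext p; simp [perp]

theorem perp_univ : perp F (Set.univ : Set (Pt O)) = ∅ := by
  ext p
  simp only [perp, Set.mem_setOf_eq, Set.mem_empty_iff_false, iff_false]
  intro h
  exact orth_irrefl F p (h p (Set.mem_univ p))

theorem inter_perp_self (S : Set (Pt O)) : S ∩ perp F S = ∅ := by
  ext p
  simp only [Set.mem_inter_iff, Set.mem_empty_iff_false, iff_false, not_and]
  intro hp hq
  exact orth_irrefl F p (hq p hp)

/-- The ortholattice of closed sets of the frame. -/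
def M := {A : Set (Pt O) // ∃ S, A = perp F S}

theorem M_closed (A : M F) : perp F (perp F A.1) = A.1 := by
  obtain ⟨S, hS⟩ := A.2
  rw [hS, perp_perp_perp]

def msup (A B : M F) : M F := ⟨perp F (perp F A.1 ∩ perp F B.1), ⟨_, rfl⟩⟩

def minf (A B : M F) : M F := ⟨A.1 ∩ B.1, by
  obtain ⟨S, hS⟩ := A.2
  obtain ⟨T, hT⟩ := B.2
  exact ⟨S ∪ T, by rw [hS, hT, perp_union]⟩⟩

def mcompl (A : M F) : M F := ⟨perp F A.1, ⟨A.1, rfl⟩⟩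

instance : Lattice (M F) where
  le A B := A.1 ⊆ B.1
  le_refl A := subset_rfl
  le_trans A B C h1 h2 := Set.Subset.trans h1 h2
  le_antisymm A B h1 h2 := Subtype.ext (subset_antisymm h1 h2)
  sup := msup F
  inf := minf F
  le_sup_left A B := by
    intro p hp q hq
    exact (hq.1 p hp).symm
  le_sup_right A B := by
    intro p hp q hq
    exact (hq.2 p hp).symm
  sup_le A B C h1 h2 := by
    have h : perp F C.1 ⊆ perp F A.1 ∩ perp F B.1 :=
      Set.subset_inter (perp_anti F h1) (perp_anti F h2)
    intro p hp
    have h2 := perp_anti F h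
    rw [M_closed] at h2
    exact h2 hp
  inf_le_left A B := Set.inter_subset_left
  inf_le_right A B := Set.inter_subset_right
  le_inf A B C h1 h2 := Set.subset_inter h1 h2

instance : BoundedOrder (M F) where
  top := ⟨Set.univ, ⟨∅, (perp_empty F).symm⟩⟩
  bot := ⟨∅, ⟨Set.univ, (perp_univ F).symm⟩⟩
  le_top A := Set.subset_univ _
  bot_le A := Set.empty_subset _

instance : Compl (M F) where
  compl := mcompl F

instance : Ortholattice (M F) where
  compl_antitone A B h := perp_anti F h
  compl_compl A := Subtype.ext (M_closed F A)
  sup_compl A := by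
    apply Subtype.ext
    show perp F (perp F A.1 ∩ perp F (perp F A.1)) = Set.univ
    rw [M_closed, Set.inter_comm, inter_perp_self, perp_empty]
  inf_compl A := by
    apply Subtype.ext
    show A.1 ∩ perp F A.1 = ∅
    exact inter_perp_self F A.1

theorem sup_val (A B : M F) : (A ⊔ B).1 = perp F (perp F A.1 ∩ perp F B.1) := rfl

theorem inf_val (A B : M F) : (A ⊓ B).1 = A.1 ∩ B.1 := rfl

theorem compl_val (A : M F) : (Aᶜ).1 = perp F A.1 := rfl

theorem perp_sup_val (A B : M F) : perp F ((A ⊔ B).1) = perp F A.1 ∩ perp F B.1 := by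
  rw [sup_val, ← perp_union, perp_perp_perp, perp_union]

theorem sup_compl_val (A B : M F) : ((A ⊔ B)ᶜ).1 = perp F A.1 ∩ perp F B.1 := by
  rw [compl_val, perp_sup_val]


open Classical in
noncomputable def ESet (b : O) : Set (Pt O) :=
  if b = ⊤ then Set.univ else
  {p | match p with
    | .x c => c ≤ b ∧ c ≠ ⊥
    | .v _ b' => bᶜ ≤ b' ∧ b' ≠ ⊤
    | .s i _ a => bᶜ ≤ F i a
    | _ => False}

theorem mem_ESet_x {b c : O} : Pt.x c ∈ ESet F b ↔ (b = ⊤ ∨ (c ≤ b ∧ c ≠ ⊥)) := by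
  by_cases h : b = ⊤ <;> simp [ESet, h, Set.mem_setOf_eq]

theorem mem_ESet_v {b b' : O} {d : Bool} :
    Pt.v d b' ∈ ESet F b ↔ (b = ⊤ ∨ (bᶜ ≤ b' ∧ b' ≠ ⊤)) := by
  by_cases h : b = ⊤ <;> simp [ESet, h, Set.mem_setOf_eq]

theorem mem_ESet_s {b a : O} {i t : Bool} :
    Pt.s i t a ∈ ESet F b ↔ (b = ⊤ ∨ bᶜ ≤ F i a) := by
  by_cases h : b = ⊤ <;> simp [ESet, h, Set.mem_setOf_eq]

theorem mem_ESet_r {b c : O} {d t : Bool} : Pt.r d t c ∈ ESet F b ↔ b = ⊤ := by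
  by_cases h : b = ⊤ <;> simp [ESet, h, Set.mem_setOf_eq]

theorem mem_ESet_gv {b : O} {d : Bool} : Pt.gv d ∈ ESet F b ↔ b = ⊤ := by
  by_cases h : b = ⊤ <;> simp [ESet, h, Set.mem_setOf_eq]

theorem mem_ESet_gr {b : O} {d t : Bool} : Pt.gr d t ∈ ESet F b ↔ b = ⊤ := by
  by_cases h : b = ⊤ <;> simp [ESet, h, Set.mem_setOf_eq]

theorem mem_ESet_gs {b : O} {i t : Bool} : Pt.gs i t ∈ ESet F b ↔ b = ⊤ := by
  by_cases h : b = ⊤ <;> simp [ESet, h, Set.mem_setOf_eq]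

theorem ESet_top : ESet F (⊤ : O) = Set.univ := if_pos rfl

theorem ESet_bot (hF : ∀ i a, F i a ≠ ⊤) (hbt : (⊥ : O) ≠ ⊤) : ESet F (⊥ : O) = ∅ := by
  ext p
  simp only [Set.mem_empty_iff_false, iff_false]
  cases p with
  | x c =>
    rw [mem_ESet_x]
    rintro (h | ⟨h1, h2⟩)
    · exact hbt h
    · exact h2 (le_bot_iff.mp h1)
  | v d b' =>
    rw [mem_ESet_v]
    rintro (h | ⟨h1, h2⟩)
    · exact hbt h
    · rw [obot_compl] at h1
      exact h2 (top_le_iff.mp h1)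
  | s i t a =>
    rw [mem_ESet_s]
    rintro (h | h1)
    · exact hbt h
    · rw [obot_compl] at h1
      exact hF i a (top_le_iff.mp h1)
  | r d t c => rw [mem_ESet_r]; exact hbt
  | gv d => rw [mem_ESet_gv]; exact hbt
  | gr d t => rw [mem_ESet_gr]; exact hbt
  | gs i t => rw [mem_ESet_gs]; exact hbt

/-- Claim A: the orthogonal of `ESet b` is `ESet bᶜ`. -/
theorem perp_ESet (hF : ∀ i a, F i a ≠ ⊤) (hbt : (⊥ : O) ≠ ⊤) (b : O) : perp F (ESet F b) = ESet F bᶜ := by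
  by_cases hb : b = ⊤
  · subst hb
    rw [ESet_top, perp_univ, otop_compl, ESet_bot F hF hbt]
  by_cases hb0 : b = ⊥
  · subst hb0
    rw [ESet_bot F hF hbt, perp_empty, obot_compl, ESet_top]
  have hbc : bᶜ ≠ ⊤ := compl_ne_top hb0
  have hbcb : bᶜ ≠ ⊥ := compl_ne_bot hb
  ext p
  constructor
  · intro hp
    have hxb := hp (Pt.x b) ((mem_ESet_x F).mpr (Or.inr ⟨le_rfl, hb0⟩))
    cases p with
    | x c =>
      rw [mem_ESet_x]
      rcases hxb with ⟨h1, h2, h3⟩ | ⟨h1, h2, h3⟩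
      · exact Or.inr ⟨h1, h2⟩
      · exact Or.inr ⟨le_compl_swap h1, h3⟩
    | v d b' =>
      rw [mem_ESet_v]
      rcases hxb with h | ⟨h1, h2, h3⟩
      · exact absurd h (by simp [base])
      · exact Or.inr ⟨by rw [occ]; exact h1, h3⟩
    | s i t a =>
      rw [mem_ESet_s]
      rcases hxb with h | ⟨h1, h2⟩
      · exact absurd h (by simp [base])
      · exact Or.inr (by rw [occ]; exact h1)
    | r d t c => exact absurd hxb (by simp [orth, base])
    | gv d => exact absurd hxb (by simp [orth, base])
    | gr d t => exact absurd hxb (by simp [orth, base])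
    | gs i t => exact absurd hxb (by simp [orth, base])
  · intro hp q hq
    cases p with
    | x c =>
      rw [mem_ESet_x] at hp
      rcases hp with h | ⟨h1, h2⟩
      · exact absurd h hbc
      cases q with
      | x d =>
        rw [mem_ESet_x F] at hq
        rcases hq with h | ⟨hq1, hq2⟩
        · exact absurd h hb
        · exact Or.inl ⟨h1.trans (oanti hq1), h2, hq2⟩
      | v d b' =>
        rw [mem_ESet_v F] at hq
        rcases hq with h | ⟨hq1, hq2⟩
        · exact absurd h hb
        · exact Or.inl ⟨h1.trans hq1, h2, hq2⟩
      | s i t a =>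
        rw [mem_ESet_s F] at hq
        rcases hq with h | hq1
        · exact absurd h hb
        · exact Or.inl ⟨h1.trans hq1, h2⟩
      | r d t c' => rw [mem_ESet_r F] at hq; exact absurd hq hb
      | gv d => rw [mem_ESet_gv F] at hq; exact absurd hq hb
      | gr d t => rw [mem_ESet_gr F] at hq; exact absurd hq hb
      | gs i t => rw [mem_ESet_gs F] at hq; exact absurd hq hb
    | v d b' =>
      rw [mem_ESet_v] at hp
      rcases hp with h | ⟨h1, h2⟩
      · exact absurd h hbc
      rw [occ] at h1
      cases q with
      | x d' =>
        rw [mem_ESet_x F] at hq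
        rcases hq with h | ⟨hq1, hq2⟩
        · exact absurd h hb
        · exact Or.inr ⟨hq1.trans h1, hq2, h2⟩
      | v d' b'' =>
        rw [mem_ESet_v F] at hq
        rcases hq with h | ⟨hq1, hq2⟩
        · exact absurd h hb
        · refine Or.inl ⟨?_, h2, hq2⟩
          exact (compl_le_swap hq1).trans h1
      | s i t a =>
        rw [mem_ESet_s F] at hq
        rcases hq with h | hq1
        · exact absurd h hb
        · refine Or.inl ⟨?_, h2⟩
          exact (compl_le_swap hq1).trans h1
      | r d' t c' => rw [mem_ESet_r F] at hq; exact absurd hq hb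
      | gv d' => rw [mem_ESet_gv F] at hq; exact absurd hq hb
      | gr d' t => rw [mem_ESet_gr F] at hq; exact absurd hq hb
      | gs i t => rw [mem_ESet_gs F] at hq; exact absurd hq hb
    | s i t a =>
      rw [mem_ESet_s] at hp
      rcases hp with h | h1
      · exact absurd h hbc
      rw [occ] at h1
      have hFa : (F i a)ᶜ ≤ bᶜ := oanti h1
      cases q with
      | x d' =>
        rw [mem_ESet_x F] at hq
        rcases hq with h | ⟨hq1, hq2⟩
        · exact absurd h hb
        · exact Or.inr ⟨hq1.trans h1, hq2⟩
      | v d' b'' =>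
        rw [mem_ESet_v F] at hq
        rcases hq with h | ⟨hq1, hq2⟩
        · exact absurd h hb
        · exact Or.inr ⟨hFa.trans hq1, hq2⟩
      | s j t' a' =>
        rw [mem_ESet_s F] at hq
        rcases hq with h | hq1
        · exact absurd h hb
        · exact Or.inl ⟨hFa.trans hq1, hF i a, hF j a'⟩
      | r d' t' c' => rw [mem_ESet_r F] at hq; exact absurd hq hb
      | gv d' => rw [mem_ESet_gv F] at hq; exact absurd hq hb
      | gr d' t' => rw [mem_ESet_gr F] at hq; exact absurd hq hb
      | gs j t' => rw [mem_ESet_gs F] at hq; exact absurd hq hb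
    | r d t c => rw [mem_ESet_r] at hp; exact absurd hp hbc
    | gv d => rw [mem_ESet_gv] at hp; exact absurd hp hbc
    | gr d t => rw [mem_ESet_gr] at hp; exact absurd hp hbc
    | gs i t => rw [mem_ESet_gs] at hp; exact absurd hp hbc


theorem ESet_inter (u w : O) : ESet F u ∩ ESet F w = ESet F (u ⊓ w) := by
  by_cases hu : u = ⊤
  · subst hu; rw [ESet_top, Set.univ_inter, top_inf_eq]
  by_cases hw : w = ⊤
  · subst hw; rw [ESet_top, Set.inter_univ, inf_top_eq]
  have huw : u ⊓ w ≠ ⊤ := fun h => hu (top_le_iff.mp (h ▸ inf_le_left))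
  ext p
  simp only [Set.mem_inter_iff]
  cases p with
  | x c =>
    rw [mem_ESet_x, mem_ESet_x, mem_ESet_x]
    simp only [hu, hw, huw, false_or]
    rw [le_inf_iff]
    tauto
  | v d b' =>
    rw [mem_ESet_v, mem_ESet_v, mem_ESet_v]
    simp only [hu, hw, huw, false_or]
    rw [ocompl_inf, sup_le_iff]
    tauto
  | s i t a =>
    rw [mem_ESet_s, mem_ESet_s, mem_ESet_s]
    simp only [hu, hw, huw, false_or]
    rw [ocompl_inf, sup_le_iff]
  | r d t c => rw [mem_ESet_r, mem_ESet_r, mem_ESet_r]; simp [hu, hw, huw]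
  | gv d => rw [mem_ESet_gv, mem_ESet_gv, mem_ESet_gv]; simp [hu, hw, huw]
  | gr d t => rw [mem_ESet_gr, mem_ESet_gr, mem_ESet_gr]; simp [hu, hw, huw]
  | gs i t => rw [mem_ESet_gs, mem_ESet_gs, mem_ESet_gs]; simp [hu, hw, huw]

/-- The embedding of `O` into `M F`. -/
noncomputable def eEmb (hF : ∀ i a, F i a ≠ ⊤) (hbt : (⊥ : O) ≠ ⊤) (b : O) : M F :=
  ⟨ESet F b, ⟨ESet F bᶜ, by rw [perp_ESet F hF hbt, occ]⟩⟩

variable (hF : ∀ i a, F i a ≠ ⊤) (hbt : (⊥ : O) ≠ ⊤)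

theorem eEmb_val (b : O) : (eEmb F hF hbt b).1 = ESet F b := rfl

theorem eEmb_le {a b : O} (h : ESet F a ⊆ ESet F b) : a ≤ b := by
  by_cases hb : b = ⊤
  · subst hb; exact le_top
  by_cases ha : a = ⊥
  · subst ha; exact bot_le
  by_cases ha2 : a = ⊤
  · subst ha2
    have := h (by rw [ESet_top]; exact Set.mem_univ (Pt.gv false))
    rw [mem_ESet_gv] at this
    exact absurd this hb
  · have := h ((mem_ESet_x F).mpr (Or.inr ⟨le_rfl, ha⟩))
    rw [mem_ESet_x] at this
    rcases this with h' | ⟨h1, _⟩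
    · exact absurd h' hb
    · exact h1

theorem eEmb_embedding : IsOrthoEmbedding (eEmb F hF hbt) := by
  refine ⟨?_, ?_, ?_, ?_, ?_, ?_⟩
  · intro a b h
    have h' : ESet F a = ESet F b := congrArg Subtype.val h
    exact le_antisymm (eEmb_le F (le_of_eq h')) (eEmb_le F (ge_of_eq h'))
  · intro a b
    apply Subtype.ext
    show ESet F (a ⊔ b) = perp F (perp F (ESet F a) ∩ perp F (ESet F b))
    rw [perp_ESet F hF hbt, perp_ESet F hF hbt, ESet_inter, perp_ESet F hF hbt,
      ocompl_inf, occ, occ]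
  · intro a b
    apply Subtype.ext
    show ESet F (a ⊓ b) = ESet F a ∩ ESet F b
    rw [ESet_inter]
  · exact Subtype.ext (ESet_bot F hF hbt)
  · exact Subtype.ext (ESet_top F)
  · intro a
    apply Subtype.ext
    show ESet F aᶜ = perp F (ESet F a)
    rw [perp_ESet F hF hbt]


theorem mem_perp_singleton {g p : Pt O} : p ∈ perp F {g} ↔ orth F p g := by
  simp [perp]

theorem stage2 (d t : Bool) (b : O) :
    perp F (ESet F b ∩ perp F {Pt.gv d}) ∩ perp F {Pt.gr d t}
      = {p | ∃ c, p = Pt.r d t c ∧ c ≤ bᶜ} := by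
  ext p
  constructor
  · rintro ⟨h1, h2⟩
    rw [mem_perp_singleton] at h2
    obtain ⟨d', t', c, rfl, rfl, rfl⟩ : ∃ d' t' c, p = Pt.r d' t' c ∧ d = d' ∧ t = t' := by
      cases p <;> simp only [orth, base, or_self, or_false, false_or] at h2 <;> try exact h2.elim
      exact ⟨_, _, _, rfl, h2.1, h2.2⟩
    refine ⟨c, rfl, ?_⟩
    by_cases hb : b = ⊥
    · subst hb; rw [obot_compl]; exact le_top
    · have hq : Pt.v d bᶜ ∈ ESet F b ∩ perp F {Pt.gv d} := by
        refine ⟨(mem_ESet_v F).mpr (Or.inr ⟨le_rfl, compl_ne_top hb⟩), ?_⟩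
        rw [mem_perp_singleton]
        exact Or.inr rfl
      have := h1 _ hq
      rcases this with h | ⟨-, h⟩
      · exact absurd h (by simp [base])
      · exact h
  · rintro ⟨c, rfl, hc⟩
    constructor
    · rintro q ⟨hq1, hq2⟩
      rw [mem_perp_singleton] at hq2
      obtain ⟨b', rfl⟩ : ∃ b', q = Pt.v d b' := by
        cases q <;> simp only [orth, base, or_self, or_false, false_or] at hq2 <;>
          try exact hq2.elim
        exact ⟨_, by rw [hq2]⟩
      rw [mem_ESet_v] at hq1
      refine Or.inr ⟨rfl, ?_⟩
      rcases hq1 with h | ⟨h1, -⟩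
      · subst h; rw [otop_compl] at hc; exact hc.trans bot_le
      · exact hc.trans h1
    · rw [mem_perp_singleton]
      exact Or.inr ⟨rfl, rfl⟩

theorem stage3 (i t : Bool) (a : O) :
    (perp F {p | ∃ c, p = Pt.r false t c ∧ c ≤ a} ∩
        perp F {p | ∃ c, p = Pt.r true t c ∧ c ≤ aᶜ}) ∩ perp F {Pt.gs i t}
      = {Pt.s i t a} := by
  ext p
  constructor
  · rintro ⟨⟨h1, h2⟩, h3⟩
    rw [mem_perp_singleton] at h3
    obtain ⟨e, rfl⟩ : ∃ e, p = Pt.s i t e := by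
      cases p <;> simp only [orth, base, or_self, or_false, false_or] at h3 <;> try exact h3.elim
      exact ⟨_, by rw [h3.1, h3.2]⟩
    have ha1 := h1 (Pt.r false t a) ⟨a, rfl, le_rfl⟩
    have ha2 := h2 (Pt.r true t aᶜ) ⟨aᶜ, rfl, le_rfl⟩
    have he1 : a ≤ e := by
      rcases ha1 with ⟨-, h⟩ | h
      · exact h
      · exact absurd h (by simp [base])
    have he2 : e ≤ a := by
      rcases ha2 with ⟨-, h⟩ | h
      · simp only [Bool.cond_true] at h
        have h2 := le_compl_swap h
        rwa [occ] at h2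
      · exact absurd h (by simp [base])
    rw [le_antisymm he2 he1]
    rfl
  · rintro rfl
    refine ⟨⟨?_, ?_⟩, ?_⟩
    · rintro q ⟨c, rfl, hc⟩
      exact Or.inl ⟨rfl, hc⟩
    · rintro q ⟨c, rfl, hc⟩
      exact Or.inl ⟨rfl, hc⟩
    · rw [mem_perp_singleton]
      exact Or.inr ⟨rfl, rfl⟩

theorem stage4 (hF : ∀ i a, F i a ≠ ⊤) (i : Bool) (a : O) :
    perp F {Pt.s i false a} ∩ perp F {Pt.s i true a} = ESet F (F i a) := by
  ext p
  rw [Set.mem_inter_iff, mem_perp_singleton, mem_perp_singleton]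
  cases p with
  | x c =>
    rw [mem_ESet_x]
    simp only [orth, base, or_false, false_or, hF i a, and_self]
  | v d b' =>
    rw [mem_ESet_v]
    simp only [orth, base, or_false, false_or, hF i a, and_self]
  | s j t' a' =>
    rw [mem_ESet_s]
    simp only [orth, base, hF i a, false_or]
    constructor
    · rintro ⟨⟨h, -, -⟩ | ⟨h, -, -⟩, -⟩
      · exact compl_le_swap h
      · exact h
    · intro h
      exact ⟨Or.inr ⟨h, hF i a, hF j a'⟩, Or.inr ⟨h, hF i a, hF j a'⟩⟩
  | r d t' c =>
    rw [mem_ESet_r]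
    cases t' <;> simp [orth, base, hF i a]
  | gv d =>
    rw [mem_ESet_gv]
    simp [orth, base, hF i a]
  | gr d t' =>
    rw [mem_ESet_gr]
    simp [orth, base, hF i a]
  | gs j t' =>
    rw [mem_ESet_gs]
    cases t' <;> simp [orth, base, hF i a]


def cl (S : Set (Pt O)) : M F := ⟨perp F (perp F S), ⟨_, rfl⟩⟩

theorem perp_cl_val (S : Set (Pt O)) : perp F ((cl F S).1) = perp F S := perp_perp_perp F S

noncomputable def q1 (z : M F) : M F := (z ⊔ cl F {Pt.gv false})ᶜ
noncomputable def q1' (z : M F) : M F := (zᶜ ⊔ cl F {Pt.gv true})ᶜ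
noncomputable def q2 (t : Bool) (z : M F) : M F := (q1 F z ⊔ cl F {Pt.gr false t})ᶜ
noncomputable def q2' (t : Bool) (z : M F) : M F := (q1' F z ⊔ cl F {Pt.gr true t})ᶜ
noncomputable def q3 (i t : Bool) (z : M F) : M F :=
  (q2 F t z ⊔ q2' F t z ⊔ cl F {Pt.gs i t})ᶜ
noncomputable def qp (i : Bool) (z : M F) : M F := (q3 F i false z ⊔ q3 F i true z)ᶜ
noncomputable def qFn (z : M F) : M F := qp F false z ⊔ qp F true z

theorem q1_val (a : O) :
    (q1 F (eEmb F hF hbt a)).1 = ESet F aᶜ ∩ perp F {Pt.gv false} := by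
  show (((eEmb F hF hbt a) ⊔ cl F {Pt.gv false})ᶜ).1 = _
  rw [sup_compl_val, perp_cl_val, eEmb_val, perp_ESet F hF hbt]

theorem q1'_val (a : O) :
    (q1' F (eEmb F hF hbt a)).1 = ESet F a ∩ perp F {Pt.gv true} := by
  show (((eEmb F hF hbt a)ᶜ ⊔ cl F {Pt.gv true})ᶜ).1 = _
  rw [sup_compl_val, perp_cl_val, compl_val, eEmb_val, perp_ESet F hF hbt,
    perp_ESet F hF hbt, occ]

theorem q2_val (t : Bool) (a : O) :
    (q2 F t (eEmb F hF hbt a)).1 = {p | ∃ c, p = Pt.r false t c ∧ c ≤ a} := by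
  show ((q1 F (eEmb F hF hbt a) ⊔ cl F {Pt.gr false t})ᶜ).1 = _
  rw [sup_compl_val, perp_cl_val, q1_val F hF hbt, stage2]
  simp only [occ]

theorem q2'_val (t : Bool) (a : O) :
    (q2' F t (eEmb F hF hbt a)).1 = {p | ∃ c, p = Pt.r true t c ∧ c ≤ aᶜ} := by
  show ((q1' F (eEmb F hF hbt a) ⊔ cl F {Pt.gr true t})ᶜ).1 = _
  rw [sup_compl_val, perp_cl_val, q1'_val F hF hbt, stage2]

theorem q3_val (i t : Bool) (a : O) :
    (q3 F i t (eEmb F hF hbt a)).1 = {Pt.s i t a} := by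
  show ((q2 F t (eEmb F hF hbt a) ⊔ q2' F t (eEmb F hF hbt a) ⊔ cl F {Pt.gs i t})ᶜ).1 = _
  rw [sup_compl_val, perp_cl_val, perp_sup_val, q2_val F hF hbt, q2'_val F hF hbt, stage3]

theorem qp_val (i : Bool) (a : O) :
    (qp F i (eEmb F hF hbt a)).1 = ESet F (F i a) := by
  show ((q3 F i false (eEmb F hF hbt a) ⊔ q3 F i true (eEmb F hF hbt a))ᶜ).1 = _
  rw [sup_compl_val, q3_val F hF hbt, q3_val F hF hbt, stage4 F hF]

theorem qFn_val (a : O) :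
    qFn F (eEmb F hF hbt a) = eEmb F hF hbt (F false a ⊔ F true a) := by
  apply Subtype.ext
  show ((qp F false (eEmb F hF hbt a) ⊔ qp F true (eEmb F hF hbt a))).1 = _
  rw [sup_val, qp_val F hF hbt, qp_val F hF hbt, perp_ESet F hF hbt, perp_ESet F hF hbt,
    ESet_inter, perp_ESet F hF hbt, ocompl_inf, occ, occ, eEmb_val]

noncomputable def pfun : (Fin 1 → M F) → M F := fun z => qFn F (z 0)

theorem pfun_poly : IsOrthoPolyFn (M F) 1 (pfun F) := by
  have h0 : IsOrthoPolyFn (M F) 1 (fun z : Fin 1 → M F => z 0) := IsOrthoPolyFn.proj 0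
  have h1 : IsOrthoPolyFn (M F) 1 (fun z : Fin 1 → M F => q1 F (z 0)) :=
    IsOrthoPolyFn.compl (IsOrthoPolyFn.sup h0 (IsOrthoPolyFn.const (cl F {Pt.gv false})))
  have h1' : IsOrthoPolyFn (M F) 1 (fun z : Fin 1 → M F => q1' F (z 0)) :=
    IsOrthoPolyFn.compl (IsOrthoPolyFn.sup (IsOrthoPolyFn.compl h0)
      (IsOrthoPolyFn.const (cl F {Pt.gv true})))
  have h2 : ∀ t, IsOrthoPolyFn (M F) 1 (fun z : Fin 1 → M F => q2 F t (z 0)) := fun t =>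
    IsOrthoPolyFn.compl (IsOrthoPolyFn.sup h1 (IsOrthoPolyFn.const (cl F {Pt.gr false t})))
  have h2' : ∀ t, IsOrthoPolyFn (M F) 1 (fun z : Fin 1 → M F => q2' F t (z 0)) := fun t =>
    IsOrthoPolyFn.compl (IsOrthoPolyFn.sup h1' (IsOrthoPolyFn.const (cl F {Pt.gr true t})))
  have h3 : ∀ i t, IsOrthoPolyFn (M F) 1 (fun z : Fin 1 → M F => q3 F i t (z 0)) := fun i t =>
    IsOrthoPolyFn.compl (IsOrthoPolyFn.sup (IsOrthoPolyFn.sup (h2 t) (h2' t))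
      (IsOrthoPolyFn.const (cl F {Pt.gs i t})))
  have hp : ∀ i, IsOrthoPolyFn (M F) 1 (fun z : Fin 1 → M F => qp F i (z 0)) := fun i =>
    IsOrthoPolyFn.compl (IsOrthoPolyFn.sup (h3 i false) (h3 i true))
  exact IsOrthoPolyFn.sup (hp false) (hp true)

end OrthoProof

/-- For every ortholattice `O` and every function `f : O → O` there is an ortholattice
extension `M` of `O` in which `f` is the restriction of a unary orthopolynomial
function. -/
theorem exists_orthoextension_representing_function (O : Type u) [Ortholattice O]
    (f : O → O) :
    ∃ (M : Type u) (_ : Ortholattice M) (e : O → M),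
      IsOrthoEmbedding e ∧
      ∃ p : (Fin 1 → M) → M, IsOrthoPolyFn M 1 p ∧
        ∀ a : O, p (fun _ => e a) = e (f a) := by
  classical
  by_cases hsm : ∀ x : O, x = ⊥ ∨ x = ⊤
  · refine ⟨O, inferInstance, id, ⟨fun a b h => h, fun _ _ => rfl, fun _ _ => rfl, rfl, rfl,
      fun _ => rfl⟩, fun z => (z 0 ⊓ f ⊤) ⊔ ((z 0)ᶜ ⊓ f ⊥), ?_, ?_⟩
    · exact IsOrthoPolyFn.sup
        (IsOrthoPolyFn.inf (IsOrthoPolyFn.proj 0) (IsOrthoPolyFn.const (f ⊤)))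
        (IsOrthoPolyFn.inf (IsOrthoPolyFn.compl (IsOrthoPolyFn.proj 0))
          (IsOrthoPolyFn.const (f ⊥)))
    · intro a
      rcases hsm a with h | h <;> subst h
      · show (⊥ ⊓ f ⊤) ⊔ ((⊥ : O)ᶜ ⊓ f ⊥) = f ⊥
        rw [bot_inf_eq, OrthoProof.obot_compl, top_inf_eq, bot_sup_eq]
      · show (⊤ ⊓ f ⊤) ⊔ ((⊤ : O)ᶜ ⊓ f ⊥) = f ⊤
        rw [top_inf_eq, OrthoProof.otop_compl, bot_inf_eq, sup_bot_eq]
  · push_neg at hsm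
    obtain ⟨d₀, hd1, hd2⟩ : ∃ x : O, x ≠ ⊥ ∧ x ≠ ⊤ := hsm
    have hbt : (⊥ : O) ≠ ⊤ := by
      intro h
      apply hd1
      have : d₀ ≤ ⊥ := by rw [h]; exact le_top
      exact le_bot_iff.mp this
    set F : Bool → O → O := fun i a =>
      cond i (if f a = ⊤ then d₀ᶜ else ⊥) (if f a = ⊤ then d₀ else f a) with hFdef
    have hF : ∀ i a, F i a ≠ ⊤ := by
      intro i a
      cases i
      · show (if f a = ⊤ then d₀ else f a) ≠ ⊤
        by_cases h : f a = ⊤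
        · rw [if_pos h]; exact hd2
        · rw [if_neg h]; exact h
      · show (if f a = ⊤ then d₀ᶜ else ⊥) ≠ ⊤
        by_cases h : f a = ⊤
        · rw [if_pos h]; exact OrthoProof.compl_ne_top hd1
        · rw [if_neg h]; exact hbt
    have hs : ∀ a, F false a ⊔ F true a = f a := by
      intro a
      show (if f a = ⊤ then d₀ else f a) ⊔ (if f a = ⊤ then d₀ᶜ else ⊥) = f a
      by_cases h : f a = ⊤
      · rw [if_pos h, if_pos h, Ortholattice.sup_compl, h]
      · rw [if_neg h, if_neg h, sup_bot_eq]
    refine ⟨OrthoProof.M F, inferInstance, OrthoProof.eEmb F hF hbt,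
      OrthoProof.eEmb_embedding F hF hbt, OrthoProof.pfun F, OrthoProof.pfun_poly F, ?_⟩
    intro a
    show OrthoProof.qFn F (OrthoProof.eEmb F hF hbt a) = _
    rw [OrthoProof.qFn_val F hF hbt, hs a]
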